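/- arXiv:2404.03848 — 4 statements merged into one kernel-verified Lean document; each statement's English description precedes it below -/
import Mathlib

section
/- Let T be a Hausdorff topological group acting continuously on a compact Hausdorff space X, let x ∈ X, and let H be a normal co-compact closed subgroup of T. Then E_x[H] is a co-compact closed subgroup of T containing H, and the left-translation action of T on the coset space T/E_x[H] is a minimal equicontinuous (almost periodic) flow. -/
open MulAction Filter Topology

private lemma inv_mem_closure_pow' {G : Type*} [Group G] [TopologicalSpace G]
    [IsTopologicalGroup G] [CompactSpace G] (g : G) :
    g⁻¹ ∈ closure {h : G | ∃ n : ℕ, 1 ≤ n ∧ g ^ n = h} := by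
  obtain ⟨p, -, hp⟩ := isCompact_univ.exists_clusterPt
    (f := Filter.map (fun n : ℕ => g ^ n) Filter.atTop) (le_principal_iff.2 Filter.univ_mem)
  have hp' : MapClusterPt p Filter.atTop (fun n : ℕ => g ^ n) := hp
  rw [mem_closure_iff_nhds]
  intro V hV
  have hU : (fun y => g⁻¹ * y) ⁻¹' V ∈ 𝓝 (1 : G) := by
    have hc : Continuous fun y : G => g⁻¹ * y := continuous_const.mul continuous_id
    apply hc.continuousAt.preimage_mem_nhds
    simpa using hV
  obtain ⟨W, hW, hWU⟩ := exists_nhds_split_inv hU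
  have hN : (fun y : G => y / p) ⁻¹' W ∈ 𝓝 p := by
    have hc : Continuous fun y : G => y / p := continuous_id.div' continuous_const
    apply hc.continuousAt.preimage_mem_nhds
    simpa using hW
  have hfreq : ∃ᶠ n in Filter.atTop, g ^ n ∈ (fun y : G => y / p) ⁻¹' W :=
    (mapClusterPt_iff_frequently.mp hp') _ hN
  obtain ⟨n, hnN, hn1⟩ := (hfreq.and_eventually (eventually_ge_atTop 1)).exists
  obtain ⟨m, hmN, hm⟩ := (hfreq.and_eventually (eventually_ge_atTop (n + 2))).exists
  have hsub : g ^ m / g ^ n = g ^ (m - n) := by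
    rw [div_eq_iff_eq_mul, ← pow_add, Nat.sub_add_cancel (by omega)]
  have hk : g ^ (m - n) ∈ (fun y => g⁻¹ * y) ⁻¹' V := by
    have := hWU _ hmN _ hnN
    rwa [div_div_div_cancel_right, hsub] at this
  refine ⟨g ^ (m - n - 1), ?_, m - n - 1, by omega, rfl⟩
  have : g⁻¹ * g ^ (m - n) = g ^ (m - n - 1) := by
    have h1 : g ^ (m - n) = g * g ^ (m - n - 1) := by
      rw [← pow_succ', Nat.sub_add_cancel (by omega)]
    rw [h1, inv_mul_cancel_left]
  rwa [← this]

/-- For `H` a normal co-compact closed subgroup of `T` and `x ∈ X`, the envelope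
`E_x[H] = {t | t • x ∈ cl(H·x)}` is a co-compact closed subgroup of `T` containing `H`,
and the left-translation flow of `T` on `T/E_x[H]` is minimal and equicontinuous
(almost periodic), where the entourages of the unique uniformity of the compact Hausdorff
space `T/E_x[H]` are the neighborhoods of the diagonal. -/
theorem envelope_cocompact_and_coset_flow_ap
    {T X : Type*} [Group T] [TopologicalSpace T] [IsTopologicalGroup T] [T2Space T]
    [TopologicalSpace X] [CompactSpace X] [T2Space X] [MulAction T X] [ContinuousSMul T X]
    (H : Subgroup T) [H.Normal] (hHclosed : IsClosed (H : Set T))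
    (hcc : CompactSpace (T ⧸ H)) (x : X) :
    (H : Set T) ⊆ {t : T | t • x ∈ closure (orbit H x)} ∧
    IsClosed {t : T | t • x ∈ closure (orbit H x)} ∧
    ∃ E : Subgroup T, (E : Set T) = {t : T | t • x ∈ closure (orbit H x)} ∧
      CompactSpace (T ⧸ E) ∧
      (∀ q : T ⧸ E, Dense (orbit T q)) ∧
      (∀ ε ∈ nhdsSet (Set.diagonal (T ⧸ E)), ∃ δ ∈ nhdsSet (Set.diagonal (T ⧸ E)),
        ∀ p ∈ δ, ∀ t : T, (t • Prod.fst p, t • Prod.snd p) ∈ ε) := by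
  haveI := hcc
  set C : Set X := closure (orbit H x) with hCdef
  set Eset : Set T := {t : T | t • x ∈ C} with hEdef
  -- a key helper: stability of C under maps preserving the orbit into C
  have key : ∀ g : T, (∀ y ∈ orbit H x, g • y ∈ C) → ∀ c ∈ C, g • c ∈ C := by
    intro g hg c hc
    have hcont : Continuous fun y : X => g • y := continuous_const_smul g
    have h2 := (image_closure_subset_closure_image hcont) ⟨c, hc, rfl⟩
    refine closure_minimal ?_ isClosed_closure h2
    rintro _ ⟨y, hy, rfl⟩
    exact hg y hy
  have hHsub : (H : Set T) ⊆ Eset := fun h hh => subset_closure ⟨⟨h, hh⟩, rfl⟩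
  -- H stabilizes C
  have hHC : ∀ h ∈ H, ∀ c ∈ C, h • c ∈ C := by
    intro h hh
    refine key h ?_
    rintro _ ⟨k, rfl⟩
    exact subset_closure ⟨⟨h, hh⟩ * k, by simp [Subgroup.smul_def, mul_smul]⟩
  -- elements of Eset map C into C
  have hEC : ∀ t ∈ Eset, ∀ c ∈ C, t • c ∈ C := by
    intro t ht
    refine key t ?_
    rintro _ ⟨k, rfl⟩
    have h1 : t • ((k : T) • x) = (t * (k : T) * t⁻¹) • (t • x) := by
      rw [← mul_smul, ← mul_smul]
      congr 1
      group
    show t • ((k : T) • x) ∈ C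
    rw [h1]
    exact hHC _ (Subgroup.Normal.conj_mem ‹H.Normal› _ k.2 t) _ ht
  have hxC : x ∈ C := subset_closure ⟨1, one_smul _ _⟩
  have hmul : ∀ a ∈ Eset, ∀ b ∈ Eset, a * b ∈ Eset := by
    intro a ha b hb
    show (a * b) • x ∈ C
    rw [mul_smul]
    exact hEC a ha _ hb
  -- saturated: Eset * H ⊆ Eset
  have hsat : ∀ s ∈ Eset, ∀ h ∈ H, s * h ∈ Eset := by
    intro s hs h hh
    show (s * h) • x ∈ C
    rw [mul_smul]
    exact hEC s hs _ (subset_closure ⟨⟨h, hh⟩, rfl⟩)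
  have hclosed : IsClosed Eset := isClosed_closure.preimage (continuous_id.smul continuous_const)
  -- closedness of the image of Eset in T ⧸ H
  have hsatur : (QuotientGroup.mk : T → T ⧸ H) ⁻¹' ((QuotientGroup.mk : T → T ⧸ H) '' Eset) = Eset := by
    apply Set.Subset.antisymm
    · rintro a ha
      obtain ⟨s, hs, hsa⟩ := ha
      have : s⁻¹ * a ∈ H := QuotientGroup.eq.mp hsa
      have := hsat s hs _ this
      simpa using this
    · exact Set.subset_preimage_image _ _
  have himgclosed : IsClosed ((QuotientGroup.mk : T → T ⧸ H) '' Eset) := by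
    rw [← QuotientGroup.isOpenQuotientMap_mk.isQuotientMap.isClosed_preimage, hsatur]
    exact hclosed
  -- inverse stability
  have hinv : ∀ a ∈ Eset, a⁻¹ ∈ Eset := by
    intro a ha
    have hpow : ∀ n : ℕ, 1 ≤ n → a ^ n ∈ Eset := by
      intro n hn
      induction n with
      | zero => omega
      | succ k ih =>
        rcases Nat.eq_or_lt_of_le hn with h | h
        · simpa [← h] using ha
        · have hk := ih (by omega)
          have : a ^ (k + 1) = a * a ^ k := by rw [pow_succ']
          rw [hEdef, Set.mem_setOf_eq, this, mul_smul]
          exact hEC a ha _ hk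
    have hmem : ((QuotientGroup.mk a : T ⧸ H))⁻¹ ∈ (QuotientGroup.mk : T → T ⧸ H) '' Eset := by
      refine himgclosed.closure_subset ?_
      refine closure_mono ?_ (inv_mem_closure_pow' (QuotientGroup.mk a : T ⧸ H))
      rintro _ ⟨n, hn, rfl⟩
      exact ⟨a ^ n, hpow n hn, by simp⟩
    obtain ⟨s, hs, hsa⟩ := hmem
    rw [← QuotientGroup.mk_inv] at hsa
    have : s⁻¹ * a⁻¹ ∈ H := QuotientGroup.eq.mp hsa
    have h2 := hsat s hs _ this
    simpa using h2
  refine ⟨hHsub, hclosed, ?_⟩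
  -- the subgroup E
  set E : Subgroup T :=
    { carrier := Eset,
      one_mem' := by simpa [hEdef] using hxC,
      mul_mem' := fun {a b} ha hb => hmul a ha b hb,
      inv_mem' := fun {a} ha => hinv a ha } with hEsubdef
  refine ⟨E, rfl, ?_, ?_, ?_⟩
  · -- CompactSpace (T ⧸ E)
    let f : T ⧸ H → T ⧸ E := Quotient.map' id fun a b hab =>
      QuotientGroup.leftRel_apply.mpr
        (show a⁻¹ * b ∈ E from hHsub (QuotientGroup.leftRel_apply.mp hab))
    have hfc : Continuous f := by
      rw [← QuotientGroup.isOpenQuotientMap_mk.continuous_comp_iff]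
      exact continuous_quotient_mk'
    have hfs : Function.Surjective f := by
      intro q
      obtain ⟨a, rfl⟩ := QuotientGroup.mk_surjective q
      exact ⟨QuotientGroup.mk a, rfl⟩
    constructor
    have h1 : IsCompact (Set.range f) := isCompact_range hfc
    rwa [Set.range_eq_univ.mpr hfs] at h1
  · -- minimality
    intro q
    have horb : orbit T q = Set.univ := by
      apply Set.eq_univ_of_forall
      intro q'
      obtain ⟨g, rfl⟩ := QuotientGroup.mk_surjective q
      obtain ⟨g', rfl⟩ := QuotientGroup.mk_surjective q'
      refine ⟨g' * g⁻¹, ?_⟩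
      show (g' * g⁻¹) • (QuotientGroup.mk g : T ⧸ E) = QuotientGroup.mk g'
      rw [MulAction.Quotient.smul_mk]
      show QuotientGroup.mk (g' * g⁻¹ * g) = (QuotientGroup.mk g' : T ⧸ E)
      rw [inv_mul_cancel_right]
    rw [horb]
    exact dense_univ
  · -- equicontinuity
    intro ε hε
    obtain ⟨U, hUopen, hdU, hUε⟩ := mem_nhdsSet_iff_exists.mp hε
    have hact : ∀ a b : T, a⁻¹ * b ∈ H → ∀ q : T ⧸ E, a • q = b • q := by
      intro a b hab q
      obtain ⟨g, rfl⟩ := QuotientGroup.mk_surjective q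
      rw [MulAction.Quotient.smul_mk, MulAction.Quotient.smul_mk]
      apply QuotientGroup.eq.mpr
      show (a • g)⁻¹ * (b • g) ∈ E
      have h1 : (a • g)⁻¹ * (b • g) = g⁻¹ * (a⁻¹ * b) * g := by
        show (a * g)⁻¹ * (b * g) = g⁻¹ * (a⁻¹ * b) * g
        group
      rw [h1]
      have := Subgroup.Normal.conj_mem ‹H.Normal› _ hab g⁻¹
      rw [inv_inv] at this
      exact hHsub this
    let Ψ : (T ⧸ H) × ((T ⧸ E) × (T ⧸ E)) → (T ⧸ E) × (T ⧸ E) := fun gp =>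
      Quotient.liftOn' gp.1 (fun t => (t • gp.2.1, t • gp.2.2)) (by
        intro a b hab
        have hab' := QuotientGroup.leftRel_apply.mp hab
        rw [hact a b hab' gp.2.1, hact a b hab' gp.2.2])
    have hΨc : Continuous Ψ := by
      have hq := (QuotientGroup.isOpenQuotientMap_mk (N := H)).prodMap
        (IsOpenQuotientMap.id (X := (T ⧸ E) × (T ⧸ E)))
      rw [← hq.continuous_comp_iff]
      exact ((continuous_fst.smul continuous_snd.fst).prodMk
        (continuous_fst.smul continuous_snd.snd))
    have hFclosed : IsClosed (Ψ ⁻¹' Uᶜ) := hUopen.isClosed_compl.preimage hΨc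
    have hsndclosed : IsClosed (Prod.snd '' (Ψ ⁻¹' Uᶜ)) :=
      isClosedMap_snd_of_compactSpace _ hFclosed
    refine ⟨(Prod.snd '' (Ψ ⁻¹' Uᶜ))ᶜ, hsndclosed.isOpen_compl.mem_nhdsSet.mpr ?_, ?_⟩
    · rintro ⟨p1, p2⟩ hp ⟨⟨g, p⟩, hgF, hsnd⟩
      obtain ⟨s, rfl⟩ := QuotientGroup.mk_surjective g
      apply hgF
      have hpp : p = (p1, p2) := hsnd
      have : Ψ (QuotientGroup.mk s, p) = (s • p1, s • p2) := by rw [hpp]; rfl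
      rw [this]
      have hp' : p1 = p2 := hp
      rw [hp']
      exact hdU rfl
    · intro p hp t
      by_contra hcon
      exact hp ⟨(QuotientGroup.mk t, p), fun h => hcon (hUε h), rfl⟩
end

section
/- Let T be a Hausdorff topological group acting continuously and minimally on a compact Hausdorff space X, and let H be a normal co-compact closed subgroup of T. Then the H-orbital closure relation R_H = {(x, x') ∈ X × X : x' ∈ cl(H·x)} is an equivalence relation on X, is closed as a subset of X × X, and is T-invariant (if (x,x') ∈ R_H then (t·x, t·x') ∈ R_H for all t ∈ T). -/
open MulAction Set Pointwise

section Aux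

variable {T X : Type*} [Group T] [TopologicalSpace T] [IsTopologicalGroup T]
  [TopologicalSpace X] [MulAction T X] [ContinuousSMul T X]

/-- For a normal subgroup `H`, translating an `H`-orbit gives the `H`-orbit of the translate. -/
lemma aux_smul_orbit (H : Subgroup T) [H.Normal] (t : T) (a : X) :
    t • (orbit H a) = orbit H (t • a) := by
  ext y
  constructor
  · rintro ⟨_, ⟨h, rfl⟩, rfl⟩
    refine ⟨⟨t * (h : T) * t⁻¹, Subgroup.Normal.conj_mem ‹H.Normal› _ h.2 t⟩, ?_⟩
    show (t * (h : T) * t⁻¹) • (t • a) = t • ((h : T) • a)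
    rw [smul_smul, smul_smul]
    congr 1
    group
  · rintro ⟨h, rfl⟩
    refine ⟨(t⁻¹ * (h : T) * t) • a, ⟨⟨t⁻¹ * (h : T) * t, ?_⟩, rfl⟩, ?_⟩
    · simpa using Subgroup.Normal.conj_mem ‹H.Normal› _ h.2 t⁻¹
    · show t • ((t⁻¹ * (h : T) * t) • a) = (h : T) • (t • a)
      rw [smul_smul, smul_smul]
      congr 1
      group

lemma aux_smul_closure_orbit (H : Subgroup T) [H.Normal] (t : T) (a : X) :
    t • closure (orbit H a) = closure (orbit H (t • a)) := by
  rw [← closure_smul, aux_smul_orbit]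

/-- Closures of `H`-orbits are `H`-invariant. -/
lemma aux_mem_closure (H : Subgroup T) [H.Normal] (h : H) (a x : X)
    (hx : x ∈ closure (orbit H a)) : (h : T) • x ∈ closure (orbit H a) := by
  have horb : orbit H ((h : T) • a) = orbit H a := by
    have : (h : T) • a = h • a := rfl
    rw [this, orbit_smul]
  have := aux_smul_closure_orbit H (h : T) a
  rw [horb] at this
  rw [← this]
  exact Set.smul_mem_smul_set hx

/-- The set `{(tH, x) : t⁻¹ • x ∈ F}` is closed in `(T ⧸ H) × X` for `F` closed and
`H`-invariant. -/
lemma aux_closed_A (H : Subgroup T) (F : Set X) (hF : IsClosed F)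
    (hinv : ∀ (h : H) (x : X), x ∈ F → (h : T) • x ∈ F) :
    IsClosed {p : (T ⧸ H) × X | ∃ t : T, (↑t : T ⧸ H) = p.1 ∧ t⁻¹ • p.2 ∈ F} := by
  have hq := ((QuotientGroup.isOpenQuotientMap_mk (N := H)).prodMap
    (IsOpenQuotientMap.id (X := X))).isQuotientMap
  rw [← hq.isClosed_preimage]
  have hpre : Prod.map (QuotientGroup.mk : T → T ⧸ H) (id : X → X) ⁻¹'
      {p : (T ⧸ H) × X | ∃ t : T, (↑t : T ⧸ H) = p.1 ∧ t⁻¹ • p.2 ∈ F}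
      = {q : T × X | q.1⁻¹ • q.2 ∈ F} := by
    ext ⟨s, x⟩
    simp only [Set.mem_preimage, Prod.map, Set.mem_setOf_eq, id]
    constructor
    · rintro ⟨t, het, hmem⟩
      have hh : t⁻¹ * s ∈ H := QuotientGroup.eq.mp het
      have heq : s⁻¹ • x = ((t⁻¹ * s)⁻¹ : T) • (t⁻¹ • x) := by
        rw [smul_smul]
        congr 1
        group
      rw [heq]
      exact hinv ⟨(t⁻¹ * s)⁻¹, H.inv_mem hh⟩ _ hmem
    · intro hx
      exact ⟨s, rfl, hx⟩
  rw [hpre]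
  exact hF.preimage ((continuous_fst.inv).smul continuous_snd)

end Aux

/-- If the `T`-flow on a compact Hausdorff space `X` is minimal and `H` is a normal
co-compact closed subgroup of `T`, then the `H`-orbital closure relation
`R_H = {(x, x') | x' ∈ cl(H·x)}` is an equivalence relation, closed in `X × X`,
and `T`-invariant. -/
theorem orbitalClosureRelation_closed_invariant_equivalence
    {T X : Type*} [Group T] [TopologicalSpace T] [IsTopologicalGroup T] [T2Space T]
    [TopologicalSpace X] [CompactSpace X] [T2Space X] [MulAction T X] [ContinuousSMul T X]
    (hmin : ∀ x : X, Dense (orbit T x))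
    (H : Subgroup T) [H.Normal] (hHclosed : IsClosed (H : Set T))
    (hcc : CompactSpace (T ⧸ H)) :
    Equivalence (fun a b : X => b ∈ closure (orbit H a)) ∧
    IsClosed {p : X × X | p.2 ∈ closure (orbit H p.1)} ∧
    ∀ (t : T) (a b : X), b ∈ closure (orbit H a) → t • b ∈ closure (orbit H (t • a)) := by
  classical
  rcases isEmpty_or_nonempty X with hX | hX
  · refine ⟨⟨fun a => (IsEmpty.false a).elim, fun {a} => (IsEmpty.false a).elim,
      fun {a} => (IsEmpty.false a).elim⟩, ?_, fun t a => (IsEmpty.false a).elim⟩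
    have : {p : X × X | p.2 ∈ closure (orbit H p.1)} = ∅ := Set.eq_empty_of_isEmpty _
    rw [this]; exact isClosed_empty
  haveI := hcc
  -- The collection of nonempty closed `H`-invariant subsets of `X`.
  set S : Set (Set X) :=
    {F | F.Nonempty ∧ IsClosed F ∧ ∀ (h : H) (x : X), x ∈ F → (h : T) • x ∈ F} with hSdef
  -- Zorn: there is a minimal element of `S`.
  have hchains : ∀ c ⊆ S, IsChain (· ⊆ ·) c → c.Nonempty →
      ∃ lb ∈ S, ∀ s ∈ c, lb ⊆ s := by
    intro c hcS hchain hcne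
    refine ⟨⋂₀ c, ⟨?_, ?_, ?_⟩, fun s hs => Set.sInter_subset_of_mem hs⟩
    · haveI : Nonempty c := hcne.to_subtype
      have h1 : Directed (· ⊇ ·) (fun F : c => (F : Set X)) := by
        rintro ⟨F, hF⟩ ⟨G, hG⟩
        rcases eq_or_ne F G with rfl | hne
        · exact ⟨⟨F, hF⟩, Set.Subset.rfl, Set.Subset.rfl⟩
        · rcases hchain hF hG hne with h | h
          · exact ⟨⟨F, hF⟩, Set.Subset.rfl, h⟩
          · exact ⟨⟨G, hG⟩, h, Set.Subset.rfl⟩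
      have h2 := IsCompact.nonempty_iInter_of_directed_nonempty_isCompact_isClosed
        (fun F : c => (F : Set X)) h1 (fun F => (hcS F.2).1)
        (fun F => (hcS F.2).2.1.isCompact) (fun F => (hcS F.2).2.1)
      rwa [Set.sInter_eq_iInter]
    · exact isClosed_sInter fun F hF => (hcS hF).2.1
    · intro h x hx
      exact Set.mem_sInter.mpr fun F hF => (hcS hF).2.2 h x (hx F hF)
  obtain ⟨M, -, hM⟩ := zorn_superset_nonempty S hchains Set.univ
    ⟨Set.univ_nonempty, isClosed_univ, fun _ _ _ => trivial⟩
  -- Closures of `H`-orbits of points of `M` equal `M`.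
  have hclosureM : ∀ y ∈ M, closure (orbit H y) = M := by
    intro y hy
    have hsub : closure (orbit H y) ⊆ M := by
      apply closure_minimal ?_ hM.prop.2.1
      rintro _ ⟨h, rfl⟩
      exact hM.prop.2.2 h y hy
    exact subset_antisymm hsub
      (hM.2 ⟨⟨y, subset_closure (mem_orbit_self y)⟩, isClosed_closure,
        fun h x hx => aux_mem_closure H h y x hx⟩ hsub)
  have hAclosed := aux_closed_A H M hM.prop.2.1 hM.prop.2.2
  set A : Set ((T ⧸ H) × X) :=
    {p | ∃ t : T, (↑t : T ⧸ H) = p.1 ∧ t⁻¹ • p.2 ∈ M} with hA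
  -- `T • M = X` via minimality and closedness of the saturation.
  have hTM : ∀ x : X, ∃ t : T, t⁻¹ • x ∈ M := by
    obtain ⟨x₀, hx₀⟩ := hM.prop.1
    have hclosed : IsClosed (Prod.snd '' A) := isClosedMap_snd_of_compactSpace _ hAclosed
    have horb : orbit T x₀ ⊆ Prod.snd '' A := by
      rintro _ ⟨t, rfl⟩
      exact ⟨(↑t, t • x₀), ⟨t, rfl, by rwa [inv_smul_smul]⟩, rfl⟩
    have huniv : (Set.univ : Set X) ⊆ Prod.snd '' A := by
      rw [← (hmin x₀).closure_eq]
      exact closure_minimal horb hclosed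
    intro x
    obtain ⟨⟨c, x'⟩, ⟨t, hct, htm⟩, hsnd⟩ := huniv (Set.mem_univ x)
    exact ⟨t, by rwa [show x' = x from hsnd] at htm⟩
  -- Every `H`-orbit closure is a translate of `M`.
  have hkey : ∀ x : X, ∃ t : T, t⁻¹ • x ∈ M ∧ closure (orbit H x) = t • M := by
    intro x
    obtain ⟨t, ht⟩ := hTM x
    refine ⟨t, ht, ?_⟩
    have h1 := aux_smul_closure_orbit H t (t⁻¹ • x)
    rw [hclosureM _ ht, smul_inv_smul] at h1
    exact h1.symm
  -- The main symmetry/transitivity fact.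
  have hmain : ∀ a b : X, b ∈ closure (orbit H a) →
      closure (orbit H b) = closure (orbit H a) := by
    intro a b hb
    obtain ⟨t, htM, hta⟩ := hkey a
    obtain ⟨s, hsM, hsb⟩ := hkey b
    have hsub : closure (orbit H b) ⊆ closure (orbit H a) := by
      apply closure_minimal ?_ isClosed_closure
      rintro _ ⟨h, rfl⟩
      exact aux_mem_closure H h a b hb
    have husub : (t⁻¹ * s) • M ⊆ M := by
      rintro _ ⟨m, hm, rfl⟩
      show (t⁻¹ * s) • m ∈ M
      have h1 : s • m ∈ t • M := by
        rw [← hta]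
        exact hsub (hsb ▸ Set.smul_mem_smul_set hm)
      obtain ⟨m', hm', heq⟩ := h1
      have heq' : t • m' = s • m := heq
      have h2 : (t⁻¹ * s) • m = m' := by rw [mul_smul, ← heq', inv_smul_smul]
      rw [h2]
      exact hm'
    have huS : (t⁻¹ * s) • M ∈ S := by
      refine ⟨hM.prop.1.smul_set, hM.prop.2.1.smul _, ?_⟩
      rintro h _ ⟨m, hm, rfl⟩
      have hconj : (t⁻¹ * s)⁻¹ * (h : T) * (t⁻¹ * s) ∈ H := by
        simpa using Subgroup.Normal.conj_mem ‹H.Normal› _ h.2 (t⁻¹ * s)⁻¹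
      refine ⟨((t⁻¹ * s)⁻¹ * (h : T) * (t⁻¹ * s)) • m,
        hM.prop.2.2 ⟨_, hconj⟩ m hm, ?_⟩
      show (t⁻¹ * s) • (((t⁻¹ * s)⁻¹ * (h : T) * (t⁻¹ * s)) • m) = (h : T) • ((t⁻¹ * s) • m)
      simp only [smul_smul]
      congr 1
      group
    have huM : (t⁻¹ * s) • M = M := subset_antisymm husub (hM.2 huS husub)
    have hst : s • M = t • M := by
      calc s • M = (t * (t⁻¹ * s)) • M := by congr 1; group
        _ = t • ((t⁻¹ * s) • M) := (smul_smul t (t⁻¹ * s) M).symm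
        _ = t • M := by rw [huM]
    rw [hsb, hta, hst]
  -- Invariance.
  have hinv : ∀ (t : T) (a b : X), b ∈ closure (orbit H a) →
      t • b ∈ closure (orbit H (t • a)) := by
    intro t a b hb
    rw [← aux_smul_closure_orbit H t a]
    exact Set.smul_mem_smul_set hb
  refine ⟨⟨fun a => subset_closure (mem_orbit_self a), ?_, ?_⟩, ?_, hinv⟩
  · intro a b hb
    rw [hmain a b hb]
    exact subset_closure (mem_orbit_self a)
  · intro a b c hb hc
    rwa [hmain a b hb] at hc
  · -- Closedness of the relation.
    have hB : IsClosed {q : (T ⧸ H) × (X × X) | (q.1, q.2.1) ∈ A ∧ (q.1, q.2.2) ∈ A} := by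
      exact (hAclosed.preimage (by fun_prop : Continuous
          fun q : (T ⧸ H) × (X × X) => (q.1, q.2.1))).inter
        (hAclosed.preimage (by fun_prop : Continuous
          fun q : (T ⧸ H) × (X × X) => (q.1, q.2.2)))
    have himg : {p : X × X | p.2 ∈ closure (orbit H p.1)} =
        Prod.snd '' {q : (T ⧸ H) × (X × X) | (q.1, q.2.1) ∈ A ∧ (q.1, q.2.2) ∈ A} := by
      ext ⟨x, y⟩
      constructor
      · intro hy
        obtain ⟨t, htM, htx⟩ := hkey x
        have hy' : y ∈ closure (orbit H x) := hy
        rw [htx] at hy'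
        refine ⟨(↑t, x, y), ⟨⟨t, rfl, htM⟩, ⟨t, rfl, ?_⟩⟩, rfl⟩
        show t⁻¹ • y ∈ M
        exact Set.mem_smul_set_iff_inv_smul_mem.mp hy'
      · rintro ⟨⟨c, x', y'⟩, ⟨⟨t, hct, htx⟩, ⟨s, hcs, hsy⟩⟩, heq⟩
        have heq' : (x', y') = (x, y) := heq
        obtain ⟨rfl, rfl⟩ := Prod.ext_iff.mp heq'
        have hct' : (↑t : T ⧸ H) = c := hct
        have hcs' : (↑s : T ⧸ H) = c := hcs
        have htx' : t⁻¹ • x' ∈ M := htx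
        have hsy' : s⁻¹ • y' ∈ M := hsy
        have hts : t⁻¹ * s ∈ H := QuotientGroup.eq.mp (hct'.trans hcs'.symm)
        have hty : t⁻¹ • y' ∈ M := by
          have h2 := hM.prop.2.2 ⟨t⁻¹ * s, hts⟩ _ hsy'
          have h3 : ((⟨t⁻¹ * s, hts⟩ : H) : T) • s⁻¹ • y' = t⁻¹ • y' := by
            rw [smul_smul]
            congr 1
            group
          rwa [h3] at h2
        have h4 := aux_smul_closure_orbit H t (t⁻¹ • x')
        rw [hclosureM _ htx', smul_inv_smul] at h4
        show y' ∈ closure (orbit H x')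
        rw [← h4]
        exact Set.mem_smul_set_iff_inv_smul_mem.mpr hty
    rw [himg]
    exact isClosedMap_snd_of_compactSpace _ hB
end

section
/- Let T be a Hausdorff topological group acting continuously and minimally on a compact Hausdorff space X, let H be a normal co-compact closed subgroup of T, and let x ∈ X. Let X/H denote the quotient of X by the closed T-invariant equivalence relation R_H = {(x,x') : x' ∈ cl(H·x)}, with T acting by t·[y] = [t·y]. Then the evaluation map 𝔢 : T/E_x[H] → X/H, t·E_x[H] ↦ [t·x] (the class of cl(H·(t·x))), is a well-defined T-equivariant homeomorphism, and consequently the T-action on X/H is a minimal equicontinuous (almost periodic) factor of the flow on X. -/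
open MulAction Set Pointwise Topology

/-- Auxiliary: projection of a closed `H`-saturated subset of `T × Z` along the
compact quotient `T ⧸ H` is closed. -/
theorem aux_closed_proj {T Z : Type*} [Group T] [TopologicalSpace T]
    [IsTopologicalGroup T] [TopologicalSpace Z] (H : Subgroup T) (hcc : CompactSpace (T ⧸ H))
    (W : Set (T × Z)) (hW : IsClosed W)
    (hsat : ∀ (t h : T), h ∈ H → ∀ z : Z, (t, z) ∈ W → (t * h, z) ∈ W) :
    IsClosed {z : Z | ∃ t : T, (t, z) ∈ W} := by
  have hopen : IsOpenMap (fun p : T × Z => ((QuotientGroup.mk p.1 : T ⧸ H), p.2)) :=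
    QuotientGroup.isOpenMap_coe.prodMap IsOpenMap.id
  have hVmem : ∀ (t : T) (z : Z),
      ((QuotientGroup.mk t : T ⧸ H), z) ∈
        (fun p : T × Z => ((QuotientGroup.mk p.1 : T ⧸ H), p.2)) '' W ↔ (t, z) ∈ W := by
    intro t z
    constructor
    · rintro ⟨⟨t', z'⟩, hmem, heq⟩
      have h1 : (QuotientGroup.mk t' : T ⧸ H) = QuotientGroup.mk t := congrArg Prod.fst heq
      have h2 : z' = z := congrArg Prod.snd heq
      have hm : t'⁻¹ * t ∈ H := QuotientGroup.eq.mp h1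
      have := hsat t' (t'⁻¹ * t) hm z' hmem
      rwa [mul_inv_cancel_left, h2] at this
    · intro hmem
      exact ⟨(t, z), hmem, rfl⟩
  have hVclosed : IsClosed ((fun p : T × Z => ((QuotientGroup.mk p.1 : T ⧸ H), p.2)) '' W) := by
    rw [← isOpen_compl_iff]
    have hcompl : ((fun p : T × Z => ((QuotientGroup.mk p.1 : T ⧸ H), p.2)) '' W)ᶜ =
        (fun p : T × Z => ((QuotientGroup.mk p.1 : T ⧸ H), p.2)) '' Wᶜ := by
      ext ⟨q, z⟩
      obtain ⟨t, rfl⟩ := QuotientGroup.mk_surjective q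
      constructor
      · intro hmem
        exact ⟨(t, z), fun hw => hmem ((hVmem t z).mpr hw), rfl⟩
      · rintro ⟨⟨t', z'⟩, hmem, heq⟩ hcon
        have h1 : (QuotientGroup.mk t' : T ⧸ H) = QuotientGroup.mk t := congrArg Prod.fst heq
        have h2 : z' = z := congrArg Prod.snd heq
        apply hmem
        have : (t, z) ∈ W := (hVmem t z).mp hcon
        have hm : t⁻¹ * t' ∈ H := QuotientGroup.eq.mp h1.symm
        have := hsat t (t⁻¹ * t') hm z this
        rwa [mul_inv_cancel_left, ← h2] at this
    rw [hcompl]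
    exact hopen _ hW.isOpen_compl
  have himg : {z : Z | ∃ t : T, (t, z) ∈ W} =
      Prod.snd '' ((fun p : T × Z => ((QuotientGroup.mk p.1 : T ⧸ H), p.2)) '' W) := by
    ext z
    constructor
    · rintro ⟨t, ht⟩
      exact ⟨((QuotientGroup.mk t : T ⧸ H), z), (hVmem t z).mpr ht, rfl⟩
    · rintro ⟨⟨q, z'⟩, hmem, rfl⟩
      obtain ⟨t, rfl⟩ := QuotientGroup.mk_surjective q
      exact ⟨t, (hVmem t z').mp hmem⟩
  rw [himg]
  exact isClosedMap_snd_of_compactSpace _ hVclosed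

/-- Let the `T`-flow on the compact Hausdorff space `X` be minimal, `H` a normal co-compact
closed subgroup of `T`, and `x ∈ X`. Let `X/H` be the quotient of `X` by the (closed,
`T`-invariant) equivalence relation `R_H = {(a,b) | b ∈ cl(H·a)}`, and let `E` be the
envelope subgroup with carrier `E_x[H] = {t | t • x ∈ cl(H·x)}`. Then: the relation `R_H`
is `T`-invariant (so the `T`-action descends to `X/H`); the evaluation map
`𝔢 : T/E → X/H`, `tE ↦ [t • x]`, is a well-defined `T`-equivariant homeomorphism;
the quotient map `X → X/H` is a continuous surjective factor map; and the descended
flow on `X/H` is minimal and equicontinuous (almost periodic), where the entourages of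
the compact Hausdorff space `X/H` are the neighborhoods of the diagonal. -/
theorem quotient_flow_isomorphic_to_coset_flow
    {T X : Type*} [Group T] [TopologicalSpace T] [IsTopologicalGroup T] [T2Space T]
    [TopologicalSpace X] [CompactSpace X] [T2Space X] [MulAction T X] [ContinuousSMul T X]
    (hmin : ∀ y : X, Dense (orbit T y))
    (H : Subgroup T) [H.Normal] (hHclosed : IsClosed (H : Set T))
    (hcc : CompactSpace (T ⧸ H)) (x : X)
    (hEquiv : Equivalence fun a b : X => b ∈ closure (orbit H a))
    (E : Subgroup T) (hE : (E : Set T) = {t : T | t • x ∈ closure (orbit H x)}) :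
    let s : Setoid X := ⟨fun a b : X => b ∈ closure (orbit H a), hEquiv⟩
    -- the `T`-action descends to `X/H`
    (∀ (g : T) (a b : X), s.r a b → s.r (g • a) (g • b)) ∧
    -- the evaluation map is a well-defined `T`-equivariant homeomorphism
    (∃ e : T ⧸ E → Quotient s,
      (∀ t : T, e (QuotientGroup.mk t) = Quotient.mk s (t • x)) ∧
      (∀ g t : T, e (g • (QuotientGroup.mk t : T ⧸ E)) = Quotient.mk s (g • (t • x))) ∧
      IsHomeomorph e) ∧
    -- `X/H` is a factor of `X`: the quotient map is continuous, surjective, equivariant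
    Continuous (Quotient.mk s) ∧ Function.Surjective (Quotient.mk s) ∧
    -- the descended flow on `X/H` is minimal
    (∀ y : X, Dense (Quotient.mk s '' orbit T y)) ∧
    -- and equicontinuous (almost periodic)
    (∀ ε ∈ nhdsSet (Set.diagonal (Quotient s)), ∃ δ ∈ nhdsSet (Set.diagonal (Quotient s)),
      ∀ a b : X, (Quotient.mk s a, Quotient.mk s b) ∈ δ →
        ∀ t : T, (Quotient.mk s (t • a), Quotient.mk s (t • b)) ∈ ε) := by
  intro s
  have hNorm : H.Normal := inferInstance
  -- orbits translate
  have horb : ∀ (t : T) (a : X), orbit H (t • a) = t • orbit H a := by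
    intro t a
    ext y
    constructor
    · rintro ⟨⟨h, hh⟩, rfl⟩
      refine ⟨(t⁻¹ * h * t) • a, ⟨⟨t⁻¹ * h * t, by simpa using hNorm.conj_mem h hh t⁻¹⟩, rfl⟩, ?_⟩
      show t • (t⁻¹ * h * t) • a = _
      rw [smul_smul]
      show _ = h • t • a
      rw [smul_smul]
      congr 1
      group
    · rintro ⟨y', ⟨⟨h, hh⟩, rfl⟩, rfl⟩
      refine ⟨⟨t * h * t⁻¹, hNorm.conj_mem h hh t⟩, ?_⟩
      show (t * h * t⁻¹) • t • a = t • h • a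
      rw [smul_smul, smul_smul]
      congr 1
      group
  have hclS : ∀ (t : T) (a : X), closure (orbit H (t • a)) = t • closure (orbit H a) := by
    intro t a; rw [horb, closure_smul]
  -- invariance of the relation
  have hinv : ∀ (g : T) (a b : X), s.r a b → s.r (g • a) (g • b) := by
    intro g a b hab
    show g • b ∈ closure (orbit H (g • a))
    rw [hclS]
    exact Set.smul_mem_smul_set hab
  have hxC : x ∈ closure (orbit H x) := subset_closure (mem_orbit_self x)
  have hHC : ∀ h ∈ H, ∀ c ∈ closure (orbit H x), h • c ∈ closure (orbit H x) := by
    intro h hh c hc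
    have key : h • closure (orbit H x) = closure (orbit H x) := by
      rw [← hclS h x, show h • x = (⟨h, hh⟩ : H) • x from rfl, orbit_smul]
    exact key ▸ Set.smul_mem_smul_set hc
  -- equivalence classes are translates of `C`
  have hclass : ∀ (t : T) (a : X), a ∈ t • closure (orbit H x) ↔ s.r (t • x) a := by
    intro t a
    rw [← hclS t x]
    exact Iff.rfl
  have hEmem : ∀ t : T, t ∈ E ↔ t • x ∈ closure (orbit H x) := by
    intro t
    rw [← SetLike.mem_coe, hE]
    exact Iff.rfl
  have hHE : ∀ h ∈ H, h ∈ E := fun h hh =>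
    (hEmem h).mpr (subset_closure ⟨⟨h, hh⟩, rfl⟩)
  -- the union of the translates of `C` is closed, hence everything
  have hUnionClosed : IsClosed {a : X | ∃ t : T, t⁻¹ • a ∈ closure (orbit H x)} := by
    refine aux_closed_proj H hcc {p : T × X | p.1⁻¹ • p.2 ∈ closure (orbit H x)} ?_ ?_
    · exact isClosed_closure.preimage ((continuous_fst.inv).smul continuous_snd)
    · intro t h hh a hmem
      show (t * h)⁻¹ • a ∈ closure (orbit H x)
      rw [mul_inv_rev, mul_smul]
      exact hHC h⁻¹ (inv_mem hh) _ hmem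
  have hcover : ∀ a : X, ∃ t : T, t⁻¹ • a ∈ closure (orbit H x) := by
    intro a
    have hsub : orbit T x ⊆ {a : X | ∃ t : T, t⁻¹ • a ∈ closure (orbit H x)} := by
      rintro _ ⟨g, rfl⟩
      exact ⟨g, by rwa [inv_smul_smul]⟩
    exact closure_minimal hsub hUnionClosed (hmin x a)
  -- the relation is closed
  have hRclosed : IsClosed {p : X × X | s.r p.1 p.2} := by
    have heq : {p : X × X | s.r p.1 p.2} = {p : X × X | ∃ t : T,
        (t⁻¹ • p.1 ∈ closure (orbit H x) ∧ t⁻¹ • p.2 ∈ closure (orbit H x))} := by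
      ext ⟨a, b⟩
      simp only [Set.mem_setOf_eq]
      constructor
      · intro hab
        obtain ⟨t, ht⟩ := hcover a
        have ha : s.r (t • x) a := (hclass t a).mp (mem_smul_set_iff_inv_smul_mem.mpr ht)
        have hb : s.r (t • x) b := hEquiv.trans ha hab
        exact ⟨t, ht, mem_smul_set_iff_inv_smul_mem.mp ((hclass t b).mpr hb)⟩
      · rintro ⟨t, ha, hb⟩
        have ha' : s.r (t • x) a := (hclass t a).mp (mem_smul_set_iff_inv_smul_mem.mpr ha)
        have hb' : s.r (t • x) b := (hclass t b).mp (mem_smul_set_iff_inv_smul_mem.mpr hb)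
        exact hEquiv.trans (hEquiv.symm ha') hb'
    rw [heq]
    refine aux_closed_proj H hcc {p : T × (X × X) | p.1⁻¹ • p.2.1 ∈ closure (orbit H x) ∧
      p.1⁻¹ • p.2.2 ∈ closure (orbit H x)} ?_ ?_
    · exact IsClosed.inter
        (isClosed_closure.preimage ((continuous_fst.inv).smul (continuous_fst.comp continuous_snd)))
        (isClosed_closure.preimage ((continuous_fst.inv).smul (continuous_snd.comp continuous_snd)))
    · rintro t h hh ⟨a, b⟩ ⟨ha, hb⟩
      constructor
      · show (t * h)⁻¹ • a ∈ closure (orbit H x)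
        rw [mul_inv_rev, mul_smul]
        exact hHC h⁻¹ (inv_mem hh) _ ha
      · show (t * h)⁻¹ • b ∈ closure (orbit H x)
        rw [mul_inv_rev, mul_smul]
        exact hHC h⁻¹ (inv_mem hh) _ hb
  -- basic facts about the quotient map
  have hmk_eq : ∀ a b : X, Quotient.mk s a = Quotient.mk s b ↔ s.r a b := by
    intro a b
    exact ⟨Quotient.exact, Quotient.sound⟩
  have hmk_cont : Continuous (Quotient.mk s) := continuous_quot_mk
  have hmk_surj : Function.Surjective (Quotient.mk s) := fun q => ⟨q.out, Quotient.out_eq q⟩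
  have hqm : IsQuotientMap (Quotient.mk s) := isQuotientMap_quotient_mk'
  have hmk_open : IsOpenMap (Quotient.mk s) := by
    intro U hU
    rw [← hqm.isOpen_preimage]
    have hpre : Quotient.mk s ⁻¹' (Quotient.mk s '' U) =
        ⋃ h : H, (fun a : X => (h : T) • a) ⁻¹' U := by
      ext a
      simp only [Set.mem_preimage, Set.mem_iUnion, Set.mem_image]
      constructor
      · rintro ⟨b, hbU, hba⟩
        have hr : s.r a b := (hmk_eq a b).mp hba.symm
        obtain ⟨y, hyU, hyo⟩ := mem_closure_iff.mp hr U hU hbU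
        obtain ⟨h, rfl⟩ := hyo
        exact ⟨h, hyU⟩
      · rintro ⟨h, hha⟩
        refine ⟨(h : T) • a, hha, ?_⟩
        exact (hmk_eq _ _).mpr (hEquiv.symm (subset_closure ⟨h, rfl⟩))
    rw [hpre]
    exact isOpen_iUnion fun h => hU.preimage (continuous_const_smul _)
  -- the quotient is Hausdorff
  have hT2 : T2Space (Quotient s) := by
    rw [t2_iff_isClosed_diagonal, ← isOpen_compl_iff]
    have hdiag : (Set.diagonal (Quotient s))ᶜ =
        (fun p : X × X => (Quotient.mk s p.1, Quotient.mk s p.2)) ''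
          {p : X × X | s.r p.1 p.2}ᶜ := by
      ext ⟨u, v⟩
      obtain ⟨a, rfl⟩ := hmk_surj u
      obtain ⟨b, rfl⟩ := hmk_surj v
      simp only [Set.mem_compl_iff, Set.mem_diagonal_iff, Set.mem_image, Set.mem_setOf_eq]
      constructor
      · intro hne
        exact ⟨(a, b), fun hr => hne ((hmk_eq a b).mpr hr), rfl⟩
      · rintro ⟨⟨a', b'⟩, hnr, heq⟩ hcon
        have h1 : Quotient.mk s a' = Quotient.mk s a := congrArg Prod.fst heq
        have h2 : Quotient.mk s b' = Quotient.mk s b := congrArg Prod.snd heq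
        exact hnr ((hmk_eq a' b').mp (h1.trans (hcon.trans h2.symm)))
    rw [hdiag]
    exact (hmk_open.prodMap hmk_open) _ hRclosed.isOpen_compl
  -- `T ⧸ E` is compact
  have hqmE : IsQuotientMap (QuotientGroup.mk : T → T ⧸ E) := isQuotientMap_quotient_mk'
  have hqmH : IsQuotientMap (QuotientGroup.mk : T → T ⧸ H) := isQuotientMap_quotient_mk'
  have hCompE : CompactSpace (T ⧸ E) := by
    have hwd : ∀ a b : T, (QuotientGroup.leftRel H) a b →
        (QuotientGroup.mk a : T ⧸ E) = QuotientGroup.mk b := fun a b hab =>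
      QuotientGroup.eq.mpr (hHE _ (QuotientGroup.leftRel_apply.mp hab))
    have hf : Continuous (fun q : T ⧸ H =>
        Quotient.liftOn' q (fun t => (QuotientGroup.mk t : T ⧸ E)) hwd) := by
      rw [hqmH.continuous_iff]
      exact hqmE.continuous
    refine ⟨?_⟩
    have huniv : (Set.univ : Set (T ⧸ E)) = (fun q : T ⧸ H =>
        Quotient.liftOn' q (fun t => (QuotientGroup.mk t : T ⧸ E)) hwd) '' Set.univ := by
      apply subset_antisymm _ (Set.subset_univ _)
      rintro q -
      obtain ⟨t, rfl⟩ := QuotientGroup.mk_surjective q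
      exact ⟨QuotientGroup.mk t, Set.mem_univ _, rfl⟩
    rw [huniv]
    exact isCompact_univ.image hf
  -- the evaluation map
  have hmkx : ∀ t t' : T, t⁻¹ * t' ∈ E → Quotient.mk s (t • x) = Quotient.mk s (t' • x) := by
    intro t t' hm
    apply (hmk_eq _ _).mpr
    apply (hclass t _).mp
    have h1 : (t⁻¹ * t') • x ∈ closure (orbit H x) := (hEmem _).mp hm
    have h2 := Set.smul_mem_smul_set (a := t) h1
    rwa [smul_smul, mul_inv_cancel_left] at h2
  set e : T ⧸ E → Quotient s := fun q =>
    Quotient.liftOn' q (fun t => Quotient.mk s (t • x))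
      (fun a b hab => hmkx a b (QuotientGroup.leftRel_apply.mp hab)) with he_def
  have he_mk : ∀ t : T, e (QuotientGroup.mk t) = Quotient.mk s (t • x) := fun t => rfl
  have he_equiv : ∀ g t : T,
      e (g • (QuotientGroup.mk t : T ⧸ E)) = Quotient.mk s (g • (t • x)) := by
    intro g t
    rw [MulAction.Quotient.smul_mk, he_mk, smul_eq_mul, mul_smul]
  have hinj : Function.Injective e := by
    intro q q'
    refine Quotient.inductionOn₂' q q' (fun t t' h => ?_)
    have hr : s.r (t • x) (t' • x) := (hmk_eq _ _).mp h
    have hmem : t' • x ∈ t • closure (orbit H x) := (hclass t _).mpr hr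
    rw [mem_smul_set_iff_inv_smul_mem, smul_smul] at hmem
    exact Quotient.sound' (QuotientGroup.leftRel_apply.mpr ((hEmem _).mpr hmem))
  have hsurj : Function.Surjective e := by
    intro z
    obtain ⟨a, rfl⟩ := hmk_surj z
    obtain ⟨t, ht⟩ := hcover a
    exact ⟨QuotientGroup.mk t,
      (hmk_eq _ _).mpr ((hclass t a).mp (mem_smul_set_iff_inv_smul_mem.mpr ht))⟩
  have hecont : Continuous e := by
    rw [hqmE.continuous_iff]
    exact hmk_cont.comp (continuous_id.smul continuous_const)
  have he_homeo : IsHomeomorph e := by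
    haveI := hCompE
    haveI := hT2
    exact isHomeomorph_iff_continuous_bijective.mpr ⟨hecont, hinj, hsurj⟩
  -- minimality of the quotient flow
  have hminq : ∀ y : X, Dense (Quotient.mk s '' orbit T y) := by
    intro y z
    obtain ⟨a, rfl⟩ := hmk_surj z
    exact image_closure_subset_closure_image hmk_cont ⟨a, hmin y a, rfl⟩
  refine ⟨hinv, ⟨e, he_mk, he_equiv, he_homeo⟩, hmk_cont, hmk_surj, hminq, ?_⟩
  -- equicontinuity
  intro ε hε
  obtain ⟨O, hOopen, hOdiag, hOsub⟩ := mem_nhdsSet_iff_exists.mp hε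
  set ρ : T × (X × X) → Quotient s × Quotient s := fun p =>
    (Quotient.mk s (p.1 • p.2.1), Quotient.mk s (p.1 • p.2.2)) with hρ
  have hkey : ∀ (t h : T), h ∈ H → ∀ a : X,
      Quotient.mk s ((t * h) • a) = Quotient.mk s (t • a) := by
    intro t h hh a
    apply (hmk_eq _ _).mpr
    apply hEquiv.symm
    show (t * h) • a ∈ closure (orbit H (t • a))
    apply subset_closure
    refine ⟨⟨t * h * t⁻¹, hNorm.conj_mem h hh t⟩, ?_⟩
    show (t * h * t⁻¹) • t • a = (t * h) • a
    rw [smul_smul]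
    congr 1
    group
  have hρsat : ∀ (t h : T), h ∈ H → ∀ p : X × X, ρ (t * h, p) = ρ (t, p) := by
    intro t h hh p
    simp only [hρ]
    rw [hkey t h hh p.1, hkey t h hh p.2]
  have hρcont : Continuous ρ := by
    apply Continuous.prodMk
    · exact hmk_cont.comp (continuous_fst.smul (continuous_fst.comp continuous_snd))
    · exact hmk_cont.comp (continuous_fst.smul (continuous_snd.comp continuous_snd))
  have hWopen : IsOpen {p : X × X | ∀ t : T, ρ (t, p) ∈ O} := by
    rw [← isClosed_compl_iff]
    have hcompl : {p : X × X | ∀ t : T, ρ (t, p) ∈ O}ᶜ =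
        {p : X × X | ∃ t : T, (t, p) ∈ ρ ⁻¹' Oᶜ} := by
      ext p
      simp [not_forall]
    rw [hcompl]
    refine aux_closed_proj H hcc (ρ ⁻¹' Oᶜ) ?_ ?_
    · exact (hOopen.isClosed_compl).preimage hρcont
    · intro t h hh z hz
      show ρ (t * h, z) ∈ Oᶜ
      rw [hρsat t h hh z]
      exact hz
  refine ⟨(fun p : X × X => (Quotient.mk s p.1, Quotient.mk s p.2)) ''
    {p : X × X | ∀ t : T, ρ (t, p) ∈ O}, ?_, ?_⟩
  · apply ((hmk_open.prodMap hmk_open) _ hWopen).mem_nhdsSet.mpr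
    rintro ⟨u, v⟩ huv
    obtain ⟨a, rfl⟩ := hmk_surj u
    have hv : v = Quotient.mk s a := huv.symm
    subst hv
    exact ⟨(a, a), fun t => hOdiag rfl, rfl⟩
  · rintro a b ⟨⟨a', b'⟩, hW, heq⟩ t
    have h1 : Quotient.mk s a' = Quotient.mk s a := congrArg Prod.fst heq
    have h2 : Quotient.mk s b' = Quotient.mk s b := congrArg Prod.snd heq
    have ha : Quotient.mk s (t • a') = Quotient.mk s (t • a) :=
      (hmk_eq _ _).mpr (hinv t _ _ ((hmk_eq _ _).mp h1))
    have hb : Quotient.mk s (t • b') = Quotient.mk s (t • b) :=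
      (hmk_eq _ _).mpr (hinv t _ _ ((hmk_eq _ _).mp h2))
    have hmem := hW t
    have hrw : ρ (t, (a', b')) = (Quotient.mk s (t • a), Quotient.mk s (t • b)) := by
      simp only [hρ]
      rw [ha, hb]
    rw [hrw] at hmem
    exact hOsub hmem
end

section
/- Let T be a Hausdorff topological group acting continuously and minimally on a compact Hausdorff space X, and let H be a normal co-compact closed subgroup of T. Let X/H denote the quotient of X by the equivalence relation R_H = {(x,x') : x' ∈ cl(H·x)}, with the induced T-action. Then X/H is not a single point (i.e., the T-flow X/H is a nontrivial factor of X) if and only if the diagonal T-action on X × T/H, given by t·(x, sH) = (t·x, tsH), is not minimal. -/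
open MulAction

/-- Auxiliary: the closure of an `H`-orbit is invariant under elements of `H`. -/
theorem aux_smul_mem_closure_orbit {T X : Type*} [Group T] [TopologicalSpace T]
    [TopologicalSpace X] [MulAction T X] [ContinuousSMul T X]
    (H : Subgroup T) {a : X} {t : T} (ht : t ∈ H) {y : X}
    (hy : y ∈ closure (orbit H a)) : t • y ∈ closure (orbit H a) := by
  refine map_mem_closure (continuous_const_smul t) hy ?_
  rintro z ⟨h, rfl⟩
  exact ⟨⟨t, ht⟩ * h, by simp [mul_smul, Submonoid.smul_def]⟩

/-- For a minimal `T`-flow on a compact Hausdorff space `X` and a normal co-compact closed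
subgroup `H` of `T`, the quotient `X/H` by the relation `R_H = {(a,b) | b ∈ cl(H·a)}` is a
nontrivial (non-singleton) factor of `X` iff the diagonal `T`-action on `X × T/H` is not
minimal. -/
theorem quotient_nontrivial_iff_prod_not_minimal
    {T X : Type*} [Group T] [TopologicalSpace T] [IsTopologicalGroup T] [T2Space T]
    [TopologicalSpace X] [CompactSpace X] [T2Space X] [Nonempty X]
    [MulAction T X] [ContinuousSMul T X]
    (hmin : ∀ y : X, Dense (orbit T y))
    (H : Subgroup T) [H.Normal] (hHclosed : IsClosed (H : Set T))
    (hcc : CompactSpace (T ⧸ H))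
    (hEquiv : Equivalence fun a b : X => b ∈ closure (orbit H a)) :
    (∃ q q' : Quotient (⟨fun a b : X => b ∈ closure (orbit H a), hEquiv⟩ : Setoid X),
        q ≠ q') ↔
      ¬ (∀ p : X × (T ⧸ H), Dense (orbit T p)) := by
  have main : (∀ p : X × (T ⧸ H), Dense (orbit T p)) ↔
      (∀ a b : X, b ∈ closure (orbit H a)) := by
    constructor
    · -- minimality of the product flow forces the quotient to be trivial
      intro hdense a b
      set C := closure (orbit H a) with hC
      set B : Set (X × T) := (fun p : X × T => p.2⁻¹ • p.1) ⁻¹' C with hB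
      have hBclosed : IsClosed B :=
        IsClosed.preimage (Continuous.smul continuous_snd.inv continuous_fst)
          isClosed_closure
      set q : T → T ⧸ H := QuotientGroup.mk with hq
      set A : Set (X × (T ⧸ H)) := Prod.map id q '' B with hA
      have hAclosed : IsClosed A := by
        rw [← isOpen_compl_iff]
        have himg : Aᶜ = Prod.map id q '' Bᶜ := by
          ext p
          constructor
          · intro hp
            obtain ⟨t, ht⟩ := QuotientGroup.mk_surjective p.2
            refine ⟨(p.1, t), fun hmem => hp ⟨(p.1, t), hmem, ?_⟩, ?_⟩ <;>
              · show (p.1, q t) = p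
                rw [hq, ht]
          · rintro ⟨⟨x, t⟩, hxt, rfl⟩ ⟨⟨x', t'⟩, hxt', heq⟩
            have hx : x' = x := congrArg Prod.fst heq
            have hqt : (t' : T ⧸ H) = (t : T ⧸ H) := congrArg Prod.snd heq
            have hmem : t⁻¹ * t' ∈ H := by
              have := (QuotientGroup.eq (s := H)).mp hqt
              simpa using H.inv_mem this
            apply hxt
            have : (t⁻¹ * t') • (t'⁻¹ • x') ∈ C :=
              aux_smul_mem_closure_orbit H hmem hxt'
            show t⁻¹ • x ∈ C
            simpa [hx, mul_smul, ← mul_smul, mul_assoc] using this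
        rw [himg]
        exact (IsOpenMap.id.prodMap (QuotientGroup.isOpenMap_coe)) _
          hBclosed.isOpen_compl
      have horb : orbit T (a, ((1 : T) : T ⧸ H)) ⊆ A := by
        rintro _ ⟨t, rfl⟩
        refine ⟨(t • a, t), ?_, ?_⟩
        · show t⁻¹ • t • a ∈ C
          rw [← mul_smul, inv_mul_cancel, one_smul]
          exact subset_closure ⟨1, one_smul _ _⟩
        · show (t • a, q t) = t • (a, ((1 : T) : T ⧸ H))
          have : q t = t • ((1 : T) : T ⧸ H) := by
            show QuotientGroup.mk t = QuotientGroup.mk (t * 1)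
            rw [mul_one]
          rw [this]
          rfl
      have hAuniv : A = Set.univ := by
        apply Set.eq_univ_of_univ_subset
        calc Set.univ = closure (orbit T (a, ((1 : T) : T ⧸ H))) :=
              ((hdense _).closure_eq).symm
          _ ⊆ closure A := closure_mono horb
          _ = A := hAclosed.closure_eq
      have hbA : (b, ((1 : T) : T ⧸ H)) ∈ A := by rw [hAuniv]; trivial
      obtain ⟨⟨x, t⟩, hxt, heq⟩ := hbA
      have hx : x = b := congrArg Prod.fst heq
      have hqt : (t : T ⧸ H) = ((1 : T) : T ⧸ H) := congrArg Prod.snd heq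
      have htH : t ∈ H := by
        have := (QuotientGroup.eq (s := H)).mp hqt
        simpa using H.inv_mem this
      have : t • (t⁻¹ • x) ∈ C := aux_smul_mem_closure_orbit H htH hxt
      simpa [hx, ← mul_smul] using this
    · -- triviality of the quotient forces the product flow to be minimal
      intro htriv p
      obtain ⟨x, sb⟩ := p
      obtain ⟨s, rfl⟩ := QuotientGroup.mk_surjective sb
      intro z
      obtain ⟨y, ub⟩ := z
      obtain ⟨u, rfl⟩ := QuotientGroup.mk_surjective ub
      have hy : u⁻¹ • y ∈ closure (orbit H (s⁻¹ • x)) := htriv _ _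
      have hmaps : Set.MapsTo (fun w : X => (u • w, ((u : T) : T ⧸ H)))
          (orbit H (s⁻¹ • x)) (orbit T (x, ((s : T) : T ⧸ H))) := by
        rintro _ ⟨h, rfl⟩
        refine ⟨u * (h : T) * s⁻¹, ?_⟩
        have h2 : (u * (h : T) * s⁻¹) • ((s : T) : T ⧸ H)
            = ((u : T) : T ⧸ H) := by
          show QuotientGroup.mk (u * (h : T) * s⁻¹ * s) = QuotientGroup.mk u
          rw [QuotientGroup.eq]
          simpa using H.inv_mem h.2
        have h1 : (u * (h : T) * s⁻¹) • x = u • (h : T) • s⁻¹ • x := by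
          simp [mul_smul]
        show (u * (h : T) * s⁻¹) • (x, ((s : T) : T ⧸ H)) = (u • h • s⁻¹ • x, _)
        rw [Prod.smul_mk, h1, h2, Submonoid.smul_def]
      have := map_mem_closure
        ((continuous_const_smul u).prodMk continuous_const) hy hmaps
      simpa using this
  rw [main]
  constructor
  · rintro ⟨q, q', hqq⟩ hall
    apply hqq
    induction q using Quotient.ind
    induction q' using Quotient.ind
    exact Quotient.sound (hall _ _)
  · intro hnall
    by_contra hno
    push_neg at hno
    apply hnall
    intro a b
    exact Quotient.exact (hno (Quotient.mk _ a) (Quotient.mk _ b))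
end
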